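/- Let x₀, y₀ ∈ ℝ and let u, p, q : [x₀,∞) × [y₀,∞) → ℝ be continuous with u, p nonnegative, q(x,y) > 0 for all (x,y), and q nondecreasing in each of its two variables. If u(x,y) ≤ q(x,y) + ∫_{x₀}^{x} ∫_{x₀}^{s} ∫_{y₀}^{y} p(η,τ) u(η,τ) dτ dη ds for all x ≥ x₀ and y ≥ y₀, then u(x,y) ≤ q(x,y) · exp( ∫_{x₀}^{x} ∫_{x₀}^{s} ∫_{y₀}^{y} p(η,τ) dτ dη ds ) for all x ≥ x₀ and y ≥ y₀. -/

import Mathlib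

open MeasureTheory Set

private lemma prim_hasDerivAt {f : ℝ → ℝ} (hf : Continuous f) (x₀ x : ℝ) :
    HasDerivAt (fun t => ∫ s in x₀..t, f s) (f x) x :=
  intervalIntegral.integral_hasDerivAt_right (hf.intervalIntegrable _ _)
    (hf.stronglyMeasurableAtFilter _ _) hf.continuousAt

private lemma gron (x₀ y₀ : ℝ) (u p q : ℝ → ℝ → ℝ)
    (hu : Continuous fun z : ℝ × ℝ => u z.1 z.2)
    (hp : Continuous fun z : ℝ × ℝ => p z.1 z.2)
    (hq : Continuous fun z : ℝ × ℝ => q z.1 z.2)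
    (hu0 : ∀ x y, 0 ≤ u x y) (hp0 : ∀ x y, 0 ≤ p x y) (hq0 : ∀ x y, 0 < q x y)
    (hqx : ∀ x₁ x₂ y, x₁ ≤ x₂ → q x₁ y ≤ q x₂ y)
    (hqy : ∀ x y₁ y₂, y₁ ≤ y₂ → q x y₁ ≤ q x y₂)
    (hineq : ∀ x y, x₀ ≤ x → y₀ ≤ y →
      u x y ≤ q x y + ∫ s in x₀..x, ∫ η in x₀..s, ∫ τ in y₀..y, p η τ * u η τ) :
    ∀ x y, x₀ ≤ x → y₀ ≤ y →
      u x y ≤ q x y * Real.exp (∫ s in x₀..x, ∫ η in x₀..s, ∫ τ in y₀..y, p η τ) := by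
  intro X Y hX hY
  -- slice continuity helpers
  have hpe1 : ∀ η, Continuous fun τ => p η τ :=
    fun η => hp.comp (Continuous.prodMk_right η)
  have hue1 : ∀ η, Continuous fun τ => u η τ :=
    fun η => hu.comp (Continuous.prodMk_right η)
  set w : ℝ → ℝ → ℝ := fun η τ => u η τ / q η τ with hwdef
  have hwc : Continuous fun z : ℝ × ℝ => w z.1 z.2 :=
    hu.div hq (fun z => (hq0 z.1 z.2).ne')
  have hwe1 : ∀ η, Continuous fun τ => w η τ :=
    fun η => hwc.comp (Continuous.prodMk_right η)
  have hw0 : ∀ η τ, 0 ≤ w η τ := fun η τ => div_nonneg (hu0 _ _) (hq0 _ _).le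
  set f : ℝ → ℝ := fun η => ∫ τ in y₀..Y, p η τ * w η τ with hfdef
  set P : ℝ → ℝ := fun η => ∫ τ in y₀..Y, p η τ with hPdef
  have hfc : Continuous f := by
    apply intervalIntegral.continuous_parametric_intervalIntegral_of_continuous'
      (f := fun η τ => p η τ * w η τ)
    exact hp.mul hwc
  have hPc : Continuous P := by
    apply intervalIntegral.continuous_parametric_intervalIntegral_of_continuous'
      (f := fun η τ => p η τ)
    exact hp
  have hf0 : ∀ η, 0 ≤ f η := fun η =>
    intervalIntegral.integral_nonneg hY (fun τ _ => mul_nonneg (hp0 _ _) (hw0 _ _))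
  have hP0 : ∀ η, 0 ≤ P η := fun η =>
    intervalIntegral.integral_nonneg hY (fun τ _ => hp0 _ _)
  set A : ℝ → ℝ := fun x => ∫ η in x₀..x, f η with hAdef
  set B : ℝ → ℝ := fun x => ∫ η in x₀..x, P η with hBdef
  have hAc : Continuous A :=
    intervalIntegral.continuous_primitive (fun a b => hfc.intervalIntegrable a b) x₀
  have hBc : Continuous B :=
    intervalIntegral.continuous_primitive (fun a b => hPc.intervalIntegrable a b) x₀
  set a : ℝ → ℝ := fun x => 1 + ∫ s in x₀..x, A s with hadef
  set G : ℝ → ℝ := fun x => ∫ s in x₀..x, B s with hGdef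
  have hac : Continuous a := continuous_const.add
    (intervalIntegral.continuous_primitive (fun a b => hAc.intervalIntegrable a b) x₀)
  have hGc : Continuous G :=
    intervalIntegral.continuous_primitive (fun a b => hBc.intervalIntegrable a b) x₀
  have haD : ∀ x, HasDerivAt a (A x) x := fun x => (prim_hasDerivAt hAc x₀ x).const_add 1
  have hGD : ∀ x, HasDerivAt G (B x) x := fun x => prim_hasDerivAt hBc x₀ x
  have hA0 : ∀ x, x₀ ≤ x → 0 ≤ A x := fun x hx =>
    intervalIntegral.integral_nonneg hx fun _ _ => hf0 _
  have ha1 : ∀ x, x₀ ≤ x → 1 ≤ a x := fun x hx =>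
    le_add_of_nonneg_right (intervalIntegral.integral_nonneg hx fun s hs => hA0 s hs.1)
  have hapos : ∀ x, x₀ ≤ x → 0 < a x := fun x hx => lt_of_lt_of_le one_pos (ha1 x hx)
  have hamono : MonotoneOn a (Set.Ici x₀) := by
    apply monotoneOn_of_deriv_nonneg (convex_Ici x₀) hac.continuousOn
      (fun x hx => (haD x).differentiableAt.differentiableWithinAt)
    intro x hx
    rw [interior_Ici] at hx
    rw [(haD x).deriv]
    exact hA0 x (le_of_lt hx)
  -- key pointwise bound  u ≤ q * a
  have key : ∀ x t, x₀ ≤ x → y₀ ≤ t → t ≤ Y → u x t ≤ q x t * a x := by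
    intro x t hx ht htY
    have hqpos := hq0 x t
    -- innermost bound
    have h1 : ∀ η, x₀ ≤ η → η ≤ x →
        (∫ τ in y₀..t, p η τ * u η τ) ≤ q x t * f η := by
      intro η hη hηx
      have step1 : (∫ τ in y₀..t, p η τ * u η τ)
          ≤ ∫ τ in y₀..t, q x t * (p η τ * w η τ) := by
        apply intervalIntegral.integral_mono_on ht
          (((hpe1 η).mul (hue1 η)).intervalIntegrable _ _)
          ((continuous_const.mul ((hpe1 η).mul (hwe1 η))).intervalIntegrable _ _)
        intro τ hτ
        have hqle : q η τ ≤ q x t :=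
          le_trans (hqx η x τ hηx) (hqy x τ t hτ.2)
        have huw : u η τ = w η τ * q η τ :=
          (div_mul_cancel₀ (u η τ) (hq0 η τ).ne').symm
        show p η τ * u η τ ≤ q x t * (p η τ * w η τ)
        rw [huw]
        calc p η τ * (w η τ * q η τ) = (p η τ * w η τ) * q η τ := by ring
          _ ≤ (p η τ * w η τ) * q x t :=
              mul_le_mul_of_nonneg_left hqle (mul_nonneg (hp0 _ _) (hw0 _ _))
          _ = q x t * (p η τ * w η τ) := by ring
      rw [intervalIntegral.integral_const_mul] at step1
      refine step1.trans (mul_le_mul_of_nonneg_left ?_ hqpos.le)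
      exact intervalIntegral.integral_mono_interval le_rfl ht htY
        (Filter.Eventually.of_forall fun τ => mul_nonneg (hp0 _ _) (hw0 _ _))
        (((hpe1 η).mul (hwe1 η)).intervalIntegrable _ _)
    -- middle layer
    have hinc : Continuous fun η => ∫ τ in y₀..t, p η τ * u η τ := by
      apply intervalIntegral.continuous_parametric_intervalIntegral_of_continuous'
        (f := fun η τ => p η τ * u η τ)
      exact hp.mul hu
    have h2 : ∀ s, x₀ ≤ s → s ≤ x →
        (∫ η in x₀..s, ∫ τ in y₀..t, p η τ * u η τ) ≤ q x t * A s := by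
      intro s hs hsx
      have step2 : (∫ η in x₀..s, ∫ τ in y₀..t, p η τ * u η τ)
          ≤ ∫ η in x₀..s, q x t * f η := by
        apply intervalIntegral.integral_mono_on hs
          (hinc.intervalIntegrable _ _)
          ((continuous_const.mul hfc).intervalIntegrable _ _)
        intro η hη
        exact h1 η hη.1 (hη.2.trans hsx)
      rwa [intervalIntegral.integral_const_mul] at step2
    -- outer layer
    have hgc : Continuous fun s => ∫ η in x₀..s, ∫ τ in y₀..t, p η τ * u η τ :=
      intervalIntegral.continuous_primitive (fun a b => hinc.intervalIntegrable a b) x₀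
    have h3 : (∫ s in x₀..x, ∫ η in x₀..s, ∫ τ in y₀..t, p η τ * u η τ)
        ≤ q x t * ∫ s in x₀..x, A s := by
      have step3 : (∫ s in x₀..x, ∫ η in x₀..s, ∫ τ in y₀..t, p η τ * u η τ)
          ≤ ∫ s in x₀..x, q x t * A s := by
        apply intervalIntegral.integral_mono_on hx
          (hgc.intervalIntegrable _ _)
          ((continuous_const.mul hAc).intervalIntegrable _ _)
        intro s hs
        exact h2 s hs.1 hs.2
      rwa [intervalIntegral.integral_const_mul] at step3
    have := hineq x t hx ht
    have hax : a x = 1 + ∫ s in x₀..x, A s := rfl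
    nlinarith [this, h3]
  -- f ≤ a * P on [x₀, ∞)
  have hfaP : ∀ η, x₀ ≤ η → f η ≤ a η * P η := by
    intro η hη
    have h1 : f η ≤ ∫ τ in y₀..Y, a η * p η τ := by
      apply intervalIntegral.integral_mono_on hY
        (((hpe1 η).mul (hwe1 η)).intervalIntegrable _ _)
        ((continuous_const.mul (hpe1 η)).intervalIntegrable _ _)
      intro τ hτ
      have hwa : w η τ ≤ a η := by
        have hk := key η τ hη hτ.1 hτ.2
        rw [hwdef]
        exact (div_le_iff₀ (hq0 η τ)).mpr (by nlinarith [hk])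
      calc p η τ * w η τ ≤ p η τ * a η :=
            mul_le_mul_of_nonneg_left hwa (hp0 _ _)
        _ = a η * p η τ := by ring
    rwa [intervalIntegral.integral_const_mul] at h1
  -- A ≤ a * B on [x₀, ∞)
  have hAaB : ∀ x, x₀ ≤ x → A x ≤ a x * B x := by
    intro x hx
    have h1 : A x ≤ ∫ η in x₀..x, a x * P η := by
      apply intervalIntegral.integral_mono_on hx
        (hfc.intervalIntegrable _ _)
        ((continuous_const.mul hPc).intervalIntegrable _ _)
      intro η hη
      calc f η ≤ a η * P η := hfaP η hη.1
        _ ≤ a x * P η :=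
          mul_le_mul_of_nonneg_right (hamono hη.1 (hη.1.trans hη.2 : x₀ ≤ x) hη.2) (hP0 η)
    rwa [intervalIntegral.integral_const_mul] at h1
  -- now log-comparison
  set L : ℝ → ℝ := fun x => G x - Real.log (a x) with hLdef
  have hLD : ∀ x, x₀ < x → HasDerivAt L (B x - A x / a x) x := fun x hx =>
    (hGD x).sub ((haD x).log (hapos x hx.le).ne')
  have hLmono : MonotoneOn L (Set.Ici x₀) := by
    apply monotoneOn_of_deriv_nonneg (convex_Ici x₀)
    · exact (hGc.continuousOn.sub
        ((hac.continuousOn).log (fun x hx => (hapos x hx).ne')))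
    · intro x hx
      rw [interior_Ici] at hx
      exact (hLD x hx).differentiableAt.differentiableWithinAt
    · intro x hx
      rw [interior_Ici] at hx
      rw [(hLD x hx).deriv]
      have h1 : A x / a x ≤ B x := by
        rw [div_le_iff₀ (hapos x hx.le)]
        calc A x ≤ a x * B x := hAaB x hx.le
          _ = B x * a x := by ring
      linarith
  have hL0 : L x₀ = 0 := by
    simp [hLdef, hGdef, hadef, intervalIntegral.integral_same]
  have hLX : 0 ≤ L X := by
    have := hLmono (self_mem_Ici) (mem_Ici.mpr hX) hX
    linarith [hL0, this]
  have haG : a X ≤ Real.exp (G X) := by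
    have hlog : Real.log (a X) ≤ G X := by
      simp only [hLdef] at hLX; linarith
    calc a X = Real.exp (Real.log (a X)) := (Real.exp_log (hapos X hX)).symm
      _ ≤ Real.exp (G X) := Real.exp_le_exp.mpr hlog
  calc u X Y ≤ q X Y * a X := key X Y hX hY le_rfl
    _ ≤ q X Y * Real.exp (G X) :=
        mul_le_mul_of_nonneg_left haG (hq0 X Y).le

/-- Continuous (𝕋₁ = 𝕋₂ = ℝ) case of Theorem 2.2: a Gronwall-type inequality
with a positive nondecreasing forcing term q. -/
theorem stmt_2 (x₀ y₀ : ℝ) (u p q : ℝ → ℝ → ℝ)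
    (hu_cont : ContinuousOn (fun z : ℝ × ℝ => u z.1 z.2) (Set.Ici x₀ ×ˢ Set.Ici y₀))
    (hp_cont : ContinuousOn (fun z : ℝ × ℝ => p z.1 z.2) (Set.Ici x₀ ×ˢ Set.Ici y₀))
    (hq_cont : ContinuousOn (fun z : ℝ × ℝ => q z.1 z.2) (Set.Ici x₀ ×ˢ Set.Ici y₀))
    (hu_nonneg : ∀ x y, x₀ ≤ x → y₀ ≤ y → 0 ≤ u x y)
    (hp_nonneg : ∀ x y, x₀ ≤ x → y₀ ≤ y → 0 ≤ p x y)
    (hq_pos : ∀ x y, x₀ ≤ x → y₀ ≤ y → 0 < q x y)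
    (hq_mono_x : ∀ x₁ x₂ y, x₀ ≤ x₁ → x₁ ≤ x₂ → y₀ ≤ y → q x₁ y ≤ q x₂ y)
    (hq_mono_y : ∀ x y₁ y₂, x₀ ≤ x → y₀ ≤ y₁ → y₁ ≤ y₂ → q x y₁ ≤ q x y₂)
    (hineq : ∀ x y, x₀ ≤ x → y₀ ≤ y →
      u x y ≤ q x y + ∫ s in x₀..x, ∫ η in x₀..s, ∫ τ in y₀..y, p η τ * u η τ) :
    ∀ x y, x₀ ≤ x → y₀ ≤ y →
      u x y ≤ q x y * Real.exp (∫ s in x₀..x, ∫ η in x₀..s, ∫ τ in y₀..y, p η τ) := by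
  -- clamped (globally continuous) versions
  set u' : ℝ → ℝ → ℝ := fun x y => u (max x x₀) (max y y₀) with hu'def
  set p' : ℝ → ℝ → ℝ := fun x y => p (max x x₀) (max y y₀) with hp'def
  set q' : ℝ → ℝ → ℝ := fun x y => q (max x x₀) (max y y₀) with hq'def
  have hclamp : Continuous fun z : ℝ × ℝ => ((max z.1 x₀, max z.2 y₀) : ℝ × ℝ) :=
    (continuous_fst.max continuous_const).prodMk (continuous_snd.max continuous_const)
  have hmaps : ∀ z : ℝ × ℝ, ((max z.1 x₀, max z.2 y₀) : ℝ × ℝ) ∈ Set.Ici x₀ ×ˢ Set.Ici y₀ :=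
    fun z => ⟨Set.mem_Ici.mpr (le_max_right _ _), Set.mem_Ici.mpr (le_max_right _ _)⟩
  have hu'c : Continuous fun z : ℝ × ℝ => u' z.1 z.2 :=
    hu_cont.comp_continuous hclamp hmaps
  have hp'c : Continuous fun z : ℝ × ℝ => p' z.1 z.2 :=
    hp_cont.comp_continuous hclamp hmaps
  have hq'c : Continuous fun z : ℝ × ℝ => q' z.1 z.2 :=
    hq_cont.comp_continuous hclamp hmaps
  have hue : ∀ x y, x₀ ≤ x → y₀ ≤ y → u' x y = u x y := by
    intro x y hx hy; simp [hu'def, max_eq_left hx, max_eq_left hy]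
  have hpe : ∀ x y, x₀ ≤ x → y₀ ≤ y → p' x y = p x y := by
    intro x y hx hy; simp [hp'def, max_eq_left hx, max_eq_left hy]
  have hqe : ∀ x y, x₀ ≤ x → y₀ ≤ y → q' x y = q x y := by
    intro x y hx hy; simp [hq'def, max_eq_left hx, max_eq_left hy]
  have hu'0 : ∀ x y, 0 ≤ u' x y := fun x y =>
    hu_nonneg _ _ (le_max_right _ _) (le_max_right _ _)
  have hp'0 : ∀ x y, 0 ≤ p' x y := fun x y =>
    hp_nonneg _ _ (le_max_right _ _) (le_max_right _ _)
  have hq'0 : ∀ x y, 0 < q' x y := fun x y =>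
    hq_pos _ _ (le_max_right _ _) (le_max_right _ _)
  have hq'x : ∀ x₁ x₂ y, x₁ ≤ x₂ → q' x₁ y ≤ q' x₂ y := fun x₁ x₂ y h =>
    hq_mono_x _ _ _ (le_max_right _ _) (max_le_max h le_rfl) (le_max_right _ _)
  have hq'y : ∀ x y₁ y₂, y₁ ≤ y₂ → q' x y₁ ≤ q' x y₂ := fun x y₁ y₂ h =>
    hq_mono_y _ _ _ (le_max_right _ _) (le_max_right _ _) (max_le_max h le_rfl)
  -- equality of the triple integrals on the domain
  have hint : ∀ (v v' : ℝ → ℝ → ℝ),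
      (∀ x y, x₀ ≤ x → y₀ ≤ y → v' x y = v x y) →
      ∀ x y, x₀ ≤ x → y₀ ≤ y →
      (∫ s in x₀..x, ∫ η in x₀..s, ∫ τ in y₀..y, v' η τ)
        = ∫ s in x₀..x, ∫ η in x₀..s, ∫ τ in y₀..y, v η τ := by
    intro v v' hvv' x y hx hy
    apply intervalIntegral.integral_congr
    intro s hs
    rw [Set.uIcc_of_le hx] at hs
    apply intervalIntegral.integral_congr
    intro η hη
    rw [Set.uIcc_of_le hs.1] at hη
    apply intervalIntegral.integral_congr
    intro τ hτ
    rw [Set.uIcc_of_le hy] at hτ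
    exact hvv' η τ hη.1 hτ.1
  have hineq' : ∀ x y, x₀ ≤ x → y₀ ≤ y →
      u' x y ≤ q' x y + ∫ s in x₀..x, ∫ η in x₀..s, ∫ τ in y₀..y, p' η τ * u' η τ := by
    intro x y hx hy
    rw [hue x y hx hy, hqe x y hx hy,
      hint (fun η τ => p η τ * u η τ) (fun η τ => p' η τ * u' η τ)
        (fun η τ hη hτ => by show p' η τ * u' η τ = p η τ * u η τ; rw [hpe η τ hη hτ, hue η τ hη hτ]) x y hx hy]
    exact hineq x y hx hy
  intro x y hx hy
  have := gron x₀ y₀ u' p' q' hu'c hp'c hq'c hu'0 hp'0 hq'0 hq'x hq'y hineq' x y hx hy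
  rwa [hue x y hx hy, hqe x y hx hy, hint p p' hpe x y hx hy] at this
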